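/- With notation as above (p^m ≡ 3 mod 4, α a non-square, β ≠ 0, γ^4 = -4α₀, α₀^{p^s} = α), a monic quadratic x² + c₁x + d₁ ∈ F_{p^m}[x] is a non-unit in 𝓡 = R[x]/⟨x^{4p^s}-(α+βu)⟩ if and only if (c₁, d₁) = (γ, γ²/2) or (c₁, d₁) = (-γ, γ²/2). -/

import Mathlib

open Polynomial

/-- The chain ring `R = F_{p^m}[u]/⟨u²⟩`. -/
abbrev Ru (K : Type) [Field K] : Type := K[X] ⧸ Ideal.span {(X : K[X]) ^ 2}

noncomputable instance Ru.instCommRing (K : Type) [Field K] : CommRing (Ru K) :=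
  Ideal.Quotient.commRing _

/-- The element `u` of `R`. -/
noncomputable def uR (K : Type) [Field K] : Ru K :=
  Ideal.Quotient.mk _ (X : K[X])

/-- The natural inclusion of `F_{p^m}` into `R`. -/
noncomputable def tR (K : Type) [Field K] (a : K) : Ru K :=
  Ideal.Quotient.mk _ (C a : K[X])

/-- The ambient ring `R[x]/⟨xⁿ - λ⟩` of `λ`-constacyclic codes of length `n` over `R`. -/
abbrev RC (K : Type) [Field K] (lam : Ru K) (n : ℕ) : Type :=
  (Ru K)[X] ⧸ Ideal.span {(X : (Ru K)[X]) ^ n - C lam}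

/-- The canonical projection `R[x] → R[x]/⟨xⁿ - λ⟩`. -/
noncomputable def mkC (K : Type) [Field K] (lam : Ru K) (n : ℕ) :
    (Ru K)[X] →+* RC K lam n :=
  Ideal.Quotient.mk _

noncomputable instance RC.instCommRing (K : Type) [Field K] (lam : Ru K) (n : ℕ) :
    CommRing (RC K lam n) :=
  Ideal.Quotient.commRing _

noncomputable def phiR (K : Type) [Field K] : Ru K →+* K :=
  Ideal.Quotient.lift _ (evalRingHom 0) (by
    intro a ha
    rw [Ideal.mem_span_singleton] at ha
    obtain ⟨b, rfl⟩ := ha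
    simp)

@[simp] lemma phiR_tR (K : Type) [Field K] (a : K) : phiR K (tR K a) = a := by
  simp [phiR, tR]

@[simp] lemma phiR_uR (K : Type) [Field K] : phiR K (uR K) = 0 := by
  simp [phiR, uR]

lemma uR_sq (K : Type) [Field K] : uR K * uR K = 0 := by
  rw [uR, ← map_mul, ← sq, Ideal.Quotient.eq_zero_iff_mem]
  exact Ideal.mem_span_singleton_self _

lemma mem_span_uR_of_phiR_eq_zero (K : Type) [Field K] {x : Ru K} (hx : phiR K x = 0) :
    x ∈ Ideal.span {uR K} := by
  obtain ⟨q, rfl⟩ := Ideal.Quotient.mk_surjective x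
  have : q.coeff 0 = 0 := by
    rw [coeff_zero_eq_eval_zero]
    simpa [phiR] using hx
  obtain ⟨r, rfl⟩ := X_dvd_iff.mpr this
  rw [Ideal.mem_span_singleton, uR]
  exact ⟨Ideal.Quotient.mk _ r, by rw [map_mul]⟩

lemma isUnit_mkC_iff (K : Type) [Field K] (lam : Ru K) (n : ℕ) (f : (Ru K)[X]) :
    IsUnit (mkC K lam n f) ↔
      IsUnit (Ideal.Quotient.mk (Ideal.span {(X : K[X]) ^ n - C (phiR K lam)})
        (f.map (phiR K))) := by
  set a := phiR K lam with ha
  set I : Ideal (Ru K)[X] := Ideal.span {(X : (Ru K)[X]) ^ n - C lam} with hI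
  set J : Ideal K[X] := Ideal.span {(X : K[X]) ^ n - C a} with hJ
  constructor
  · intro h
    have hker : ∀ g ∈ I, (Ideal.Quotient.mk J).comp (mapRingHom (phiR K)) g = 0 := by
      intro g hg
      rw [hI, Ideal.mem_span_singleton] at hg
      obtain ⟨b, rfl⟩ := hg
      rw [RingHom.comp_apply, Ideal.Quotient.eq_zero_iff_mem, hJ, Ideal.mem_span_singleton]
      exact ⟨b.map (phiR K), by simp [ha]⟩
    let Ψ : RC K lam n →+* K[X] ⧸ J := Ideal.Quotient.lift I _ hker
    have := h.map Ψ
    exact this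
  · intro h
    obtain ⟨v, hv⟩ := h
    obtain ⟨t, ht⟩ := Ideal.Quotient.mk_surjective (↑v⁻¹ : K[X] ⧸ J)
    have hmem : f.map (phiR K) * t - 1 ∈ J := by
      rw [← Ideal.Quotient.eq_zero_iff_mem]
      rw [map_sub, map_mul, map_one, ht, ← hv]
      simp
    rw [hJ, Ideal.mem_span_singleton] at hmem
    obtain ⟨c, hc⟩ := hmem
    -- lift back
    set ι : K[X] →+* (Ru K)[X] :=
      mapRingHom ((Ideal.Quotient.mk (Ideal.span {(X : K[X]) ^ 2})).comp
        (C : K →+* K[X])) with hι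
    have hcomp : (phiR K).comp ((Ideal.Quotient.mk (Ideal.span {(X : K[X]) ^ 2})).comp
        (C : K →+* K[X])) = RingHom.id K := by
      ext x
      simp [phiR]
    have hmapι : ∀ g : K[X], (ι g).map (phiR K) = g := by
      intro g
      rw [hι, coe_mapRingHom, map_map, hcomp, map_id]
    set w : (Ru K)[X] := f * ι t - 1 - ((X : (Ru K)[X]) ^ n - C lam) * ι c with hw
    have hwmap : w.map (phiR K) = 0 := by
      rw [hw]
      simp only [Polynomial.map_sub, Polynomial.map_mul, Polynomial.map_one,
        Polynomial.map_pow, map_X, map_C, hmapι]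
      rw [← ha, hc]
      ring
    have hwmem : w ∈ Ideal.span {(C (uR K) : (Ru K)[X])} := by
      have : w ∈ Ideal.map (C : Ru K →+* (Ru K)[X]) (Ideal.span {uR K}) := by
        rw [Ideal.mem_map_C_iff]
        intro k
        apply mem_span_uR_of_phiR_eq_zero
        have := congrArg (fun q => Polynomial.coeff q k) hwmap
        simpa [coeff_map] using this
      rwa [Ideal.map_span, Set.image_singleton] at this
    rw [Ideal.mem_span_singleton] at hwmem
    obtain ⟨v2, hv2⟩ := hwmem
    -- now in the quotient
    set z : RC K lam n := mkC K lam n (C (uR K) * v2) with hz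
    have hz2 : z * z = 0 := by
      rw [hz, mkC, ← map_mul]
      have : (C (uR K) * v2) * (C (uR K) * v2) = C (uR K * uR K) * (v2 * v2) := by
        rw [C_mul]; ring
      rw [this, uR_sq, map_zero, zero_mul, map_zero]
    have hfe : mkC K lam n f * mkC K lam n (ι t) = 1 + z := by
      have : f * ι t = 1 + ((X : (Ru K)[X]) ^ n - C lam) * ι c + C (uR K) * v2 := by
        rw [← hv2, hw]; ring
      rw [mkC, ← map_mul, this]
      have h0 : (Ideal.Quotient.mk I) (((X : (Ru K)[X]) ^ n - C lam) * ι c) = 0 := by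
        rw [Ideal.Quotient.eq_zero_iff_mem]
        exact Ideal.mul_mem_right _ _ (Ideal.subset_span rfl)
      rw [map_add, map_add, map_one, h0, add_zero, hz, mkC]
    refine IsUnit.of_mul_eq_one (mkC K lam n (ι t) * (1 - z)) ?_
    rw [← mul_assoc, hfe]
    ring_nf
    rw [mul_comm z z] at hz2
    linear_combination -hz2

lemma isUnit_mk_iff_isCoprime (K : Type) [Field K] (h g : K[X]) :
    IsUnit (Ideal.Quotient.mk (Ideal.span {h}) g) ↔ IsCoprime g h := by
  constructor
  · rintro ⟨v, hv⟩
    obtain ⟨t, ht⟩ := Ideal.Quotient.mk_surjective (↑v⁻¹ : K[X] ⧸ Ideal.span {h})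
    have hmem : g * t - 1 ∈ Ideal.span {h} := by
      rw [← Ideal.Quotient.eq_zero_iff_mem, map_sub, map_mul, map_one, ht, ← hv]
      simp
    rw [Ideal.mem_span_singleton] at hmem
    obtain ⟨c, hc⟩ := hmem
    exact ⟨t, -c, by linear_combination hc⟩
  · rintro ⟨a, b, hab⟩
    refine IsUnit.of_mul_eq_one (Ideal.Quotient.mk _ a) ?_
    have hh : (Ideal.Quotient.mk (Ideal.span {h})) h = 0 := by
      rw [Ideal.Quotient.eq_zero_iff_mem]; exact Ideal.mem_span_singleton_self _
    rw [← map_one (Ideal.Quotient.mk (Ideal.span {h})), ← hab]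
    rw [map_add, map_mul, map_mul, hh, mul_zero, add_zero, mul_comm]

lemma quad_natDegree (K : Type) [Field K] (e d : K) :
    (X ^ 2 + C e * X + C d : K[X]).natDegree = 2 := by
  compute_degree!

lemma quad_monic (K : Type) [Field K] (e d : K) :
    (X ^ 2 + C e * X + C d : K[X]).Monic := by
  rw [Monic, leadingCoeff, quad_natDegree]
  simp [coeff_X_pow, coeff_C]

lemma quad_eq_iff (K : Type) [Field K] (a b a' b' : K) :
    (X ^ 2 + C a * X + C b : K[X]) = X ^ 2 + C a' * X + C b' ↔ a = a' ∧ b = b' := by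
  constructor
  · intro h
    constructor
    · have := congrArg (fun q : K[X] => q.coeff 1) h
      simpa [coeff_X_pow, coeff_C] using this
    · have := congrArg (fun q : K[X] => q.coeff 0) h
      simpa [coeff_X_pow, coeff_C] using this
  · rintro ⟨rfl, rfl⟩; rfl

lemma quad_irreducible (K : Type) [Field K] (hsq : ¬ IsSquare (-1 : K))
    (γ e d : K) (hγ0 : γ ≠ 0) (he : e * e = γ * γ) (hd : d + d = γ * γ) :
    Irreducible (X ^ 2 + C e * X + C d : K[X]) := by
  rw [irreducible_iff_roots_eq_zero_of_degree_le_three (by rw [quad_natDegree])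
    (by rw [quad_natDegree]; norm_num)]
  rw [Multiset.eq_zero_iff_forall_notMem]
  intro r hr
  rw [mem_roots', IsRoot] at hr
  obtain ⟨-, hr⟩ := hr
  simp only [eval_add, eval_mul, eval_pow, eval_X, eval_C] at hr
  apply hsq
  have key : (2 * r + e) * (2 * r + e) = -(γ * γ) := by
    linear_combination 4 * hr + he - 2 * hd
  refine ⟨(2 * r + e) / γ, ?_⟩
  field_simp
  linear_combination -key

theorem stmt11 (p s m : ℕ) (hp : p.Prime) (hodd : Odd p) (hs : 0 < s) (hm : 0 < m)
    (K : Type) [Field K] [Fintype K] (hK : Fintype.card K = p ^ m)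
    (h3 : p ^ m % 4 = 3) (α β : K) (hα : α ≠ 0) (hns : ¬ IsSquare α) (hβ : β ≠ 0)
    (α₀ : K) (hα₀ : α₀ ^ p ^ s = α) (γ : K) (hγ : γ ^ 4 = -4 * α₀)
    (c₁ d₁ : K) :
    ¬ IsUnit (mkC K (tR K α + tR K β * uR K) (4 * p ^ s)
        (X ^ 2 + C (tR K c₁) * X + C (tR K d₁))) ↔
      (c₁ = γ ∧ d₁ = γ ^ 2 / 2) ∨ (c₁ = -γ ∧ d₁ = γ ^ 2 / 2) := by
  classical
  -- characteristic
  haveI : CharP K (ringChar K) := ringChar.charP K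
  have hrprime : (ringChar K).Prime := CharP.char_is_prime K (ringChar K)
  obtain ⟨n0, -, hn0⟩ := FiniteField.card K (ringChar K)
  have hpr : p = ringChar K := by
    have hd1 : p ∣ ringChar K ^ (n0 : ℕ) := by
      rw [← hn0, hK]
      exact dvd_pow_self p hm.ne'
    exact (Nat.prime_dvd_prime_iff_eq hp hrprime).mp (hp.dvd_of_dvd_pow hd1)
  haveI hcp : CharP K p := hpr ▸ ringChar.charP K
  haveI : Fact p.Prime := ⟨hp⟩
  -- basic nonzero facts
  have h2 : (2 : K) ≠ 0 := by
    intro h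
    have h2' : p ∣ 2 := (CharP.cast_eq_zero_iff K p 2).mp (by exact_mod_cast h)
    have := (Nat.prime_dvd_prime_iff_eq hp Nat.prime_two).mp h2'
    rw [this] at hodd
    have := Nat.odd_iff.mp hodd
    omega
  have hps : 0 < p ^ s := pow_pos hp.pos s
  have hα₀0 : α₀ ≠ 0 := by
    intro h
    exact hα (by rw [← hα₀, h, zero_pow hps.ne'])
  have h4 : (4 : K) ≠ 0 := by
    have : (4 : K) = 2 * 2 := by norm_num
    rw [this]; exact mul_ne_zero h2 h2
  have hγ0 : γ ≠ 0 := by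
    intro h
    rw [h] at hγ
    have h40 : (4 : K) * α₀ = 0 := by linear_combination hγ
    rcases mul_eq_zero.mp h40 with h' | h'
    · exact h4 h'
    · exact hα₀0 h'
  have hsq : ¬ IsSquare (-1 : K) := by
    intro h
    exact (FiniteField.isSquare_neg_one_iff.mp h) (by rw [hK]; exact h3)
  set d : K := γ ^ 2 / 2 with hd
  have hdd : d + d = γ * γ := by rw [hd]; field_simp; ring
  have hddm : d * d = -α₀ := by
    rw [hd]
    field_simp
    linear_combination hγ
  -- reduction to the residue field
  have hlam : phiR K (tR K α + tR K β * uR K) = α := by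
    rw [map_add, map_mul, phiR_tR, phiR_tR, phiR_uR, mul_zero, add_zero]
  have hgmap : (X ^ 2 + C (tR K c₁) * X + C (tR K d₁)).map (phiR K)
      = X ^ 2 + C c₁ * X + C d₁ := by
    simp [Polynomial.map_add, Polynomial.map_mul, Polynomial.map_pow]
  rw [isUnit_mkC_iff, hlam, hgmap, isUnit_mk_iff_isCoprime]
  -- factorization of Xⁿ - α
  have hfact : (X : K[X]) ^ (4 * p ^ s) - C α =
      ((X ^ 2 + C γ * X + C d) * (X ^ 2 + C (-γ) * X + C d)) ^ p ^ s := by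
    have hq : (X ^ 2 + C γ * X + C d) * (X ^ 2 + C (-γ) * X + C d)
        = (X : K[X]) ^ 4 - C α₀ := by
      have h1 : (C d : K[X]) + C d = C γ * C γ := by
        rw [← C_mul, ← C_add, hdd]
      have h2' : (C d : K[X]) * C d = -C α₀ := by
        rw [← C_mul, ← C_neg, hddm]
      have h3' : (C (-γ) : K[X]) = -C γ := by rw [map_neg]
      rw [h3']
      linear_combination (X : K[X]) ^ 2 * h1 + h2'
    rw [hq, ← hα₀, C_pow, mul_comm 4 (p ^ s), pow_mul', ← sub_pow_char_pow]
  rw [hfact, IsCoprime.pow_right_iff hps, IsCoprime.mul_right_iff, not_and_or]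
  have main : ∀ e : K, e * e = γ * γ →
      (¬ IsCoprime (X ^ 2 + C c₁ * X + C d₁) (X ^ 2 + C e * X + C d : K[X]) ↔
        (c₁ = e ∧ d₁ = γ ^ 2 / 2)) := by
    intro e he
    have hirr := quad_irreducible K hsq γ e d hγ0 he hdd
    rw [isCoprime_comm, hirr.coprime_iff_not_dvd, not_not, ← hd]
    constructor
    · intro hdvd
      have heq := eq_of_dvd_of_natDegree_le_of_leadingCoeff hdvd
        (by rw [quad_natDegree, quad_natDegree])
        (by rw [(quad_monic K e d).leadingCoeff, (quad_monic K c₁ d₁).leadingCoeff])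
      exact (quad_eq_iff K c₁ d₁ e d).mp heq.symm
    · intro ⟨h1, h2⟩
      rw [(quad_eq_iff K c₁ d₁ e d).mpr ⟨h1, h2⟩]
  exact or_congr (main γ rfl) (main (-γ) (by ring))
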